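/- For every natural number k ≥ 0 there exists a finite cyclic group G and generators g_1, g_2, g_3 of G such that every element of G can be written as a_1 g_1 + a_2 g_2 + a_3 g_3 with integers a_i satisfying |a_1|+|a_2|+|a_3| ≤ k, and |G| = n, where n = (32k³+48k²+54k+27)/27 if k ≡ 0 (mod 3), n = (32k³+48k²+78k+31)/27 if k ≡ 1 (mod 3), and n = (32k³+48k²+54k+11)/27 if k ≡ 2 (mod 3). Equivalently, there exists a finite-index subgroup L ≤ ℤ³ with ℤ³/L cyclic, S_{3,k} + L = ℤ³, and [ℤ³ : L] = n. -/

import Mathlib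

private lemma reduceLem (A B n k : ℤ) (hn : 0 < n) (hodd : n % 2 = 1)
    (H : ∀ r : ℤ, 0 ≤ r → 2*r + 1 ≤ n →
      ∃ c₁ c₂ c₃ : ℤ, |c₁| + |c₂| + |c₃| ≤ k ∧ n ∣ (c₁ + A*c₂ + B*c₃ - r)) (x : ℤ) :
    ∃ c₁ c₂ c₃ : ℤ, |c₁| + |c₂| + |c₃| ≤ k ∧ n ∣ (c₁ + A*c₂ + B*c₃ - x) := by
  have h0 : 0 ≤ x % n := Int.emod_nonneg x hn.ne'
  have h1 : x % n < n := Int.emod_lt_of_pos x hn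
  have hu : x % n = x - n * (x / n) := Int.emod_def x n
  rcases le_or_gt (2*(x % n) + 1) n with h | h
  · obtain ⟨c₁, c₂, c₃, hc, w, hw⟩ := H (x % n) h0 h
    exact ⟨c₁, c₂, c₃, hc, ⟨w - x / n, by linear_combination hw + hu⟩⟩
  · obtain ⟨c₁, c₂, c₃, hc, w, hw⟩ := H (n - x % n) (by omega) (by omega)
    refine ⟨-c₁, -c₂, -c₃, ?_, ⟨-w - 1 - x / n, by linear_combination -hw + hu⟩⟩
    simpa [abs_neg] using hc

private lemma key0 (m : ℤ) (hm : 0 ≤ m) (x : ℤ) :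
    ∃ c₁ c₂ c₃ : ℤ, |c₁| + |c₂| + |c₃| ≤ 3*m ∧
      (32*m^3+16*m^2+6*m+1) ∣ (c₁ + (4*m+1)*c₂ + (16*m^2+4*m+1)*c₃ - x) := by
  apply reduceLem _ _ _ _ (by nlinarith)
    (by have h : (32*m^3+16*m^2+6*m+1 : ℤ) = 2*(16*m^3+8*m^2+3*m)+1 := by ring
        omega)
  intro r hr0 hr1
  have hb : (0:ℤ) < 16*m^2+4*m+1 := by nlinarith
  have ha : (0:ℤ) < 4*m+1 := by omega
  obtain ⟨t, y, hyr, hy0, hy1, ht0⟩ :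
      ∃ t y : ℤ, (16*m^2+4*m+1) * t + y = r ∧ 0 ≤ y ∧ y < 16*m^2+4*m+1 ∧ 0 ≤ t :=
    ⟨r / (16*m^2+4*m+1), r % (16*m^2+4*m+1), Int.mul_ediv_add_emod r _,
      Int.emod_nonneg r hb.ne', Int.emod_lt_of_pos r hb, Int.ediv_nonneg hr0 hb.le⟩
  have htm : t ≤ m := by
    have h2 : (16*m^2+4*m+1) * t < (16*m^2+4*m+1) * (m+1) := by nlinarith
    have h3 := lt_of_mul_lt_mul_left h2 hb.le
    omega
  obtain ⟨q0, s0, hsy, hs00, hs01, hq00⟩ :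
      ∃ q0 s0 : ℤ, (4*m+1) * q0 + s0 = y ∧ 0 ≤ s0 ∧ s0 < 4*m+1 ∧ 0 ≤ q0 :=
    ⟨y / (4*m+1), y % (4*m+1), Int.mul_ediv_add_emod y _,
      Int.emod_nonneg y ha.ne', Int.emod_lt_of_pos y ha, Int.ediv_nonneg hy0 ha.le⟩
  -- produce q s with balanced s
  obtain ⟨q, s, hr, hq0, hq1, hsl, hsu⟩ :
      ∃ q s : ℤ, (16*m^2+4*m+1)*t + (4*m+1)*q + s = r ∧
        0 ≤ q ∧ q ≤ 4*m ∧ -(2*m) ≤ s ∧ s ≤ 2*m := by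
    rcases le_or_gt s0 (2*m) with hs | hs
    · refine ⟨q0, s0, by linarith, hq00, ?_, by omega, hs⟩
      have h2 : (4*m+1) * q0 < (4*m+1) * (4*m+1) := by nlinarith
      have h3 := lt_of_mul_lt_mul_left h2 ha.le
      omega
    · refine ⟨q0 + 1, s0 - (4*m+1), by linarith, by omega, ?_, by omega, by omega⟩
      have h2 : (4*m+1) * q0 < (4*m+1) * (4*m) := by nlinarith
      have h3 := lt_of_mul_lt_mul_left h2 ha.le
      omega
  have hcase : |s| + |q| + |t| ≤ 3*m ∨ |s-2*m-1| + |q-2*m| + |t-2*m| ≤ 3*m ∨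
      |s+2*m| + |q-2*m-1| + |t-2*m| ≤ 3*m ∨ |s-1| + |q-4*m| + |t+1| ≤ 3*m := by
    simp only [Int.abs_eq_natAbs]; omega
  rcases hcase with hc | hc | hc | hc
  · exact ⟨s, q, t, hc, ⟨0, by linear_combination hr⟩⟩
  · exact ⟨s-2*m-1, q-2*m, t-2*m, hc, ⟨-1, by linear_combination hr⟩⟩
  · exact ⟨s+2*m, q-2*m-1, t-2*m, hc, ⟨-1, by linear_combination hr⟩⟩
  · exact ⟨s-1, q-4*m, t+1, hc, ⟨0, by linear_combination hr⟩⟩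

private lemma key2 (m : ℤ) (hm : 0 ≤ m) (x : ℤ) :
    ∃ c₁ c₂ c₃ : ℤ, |c₁| + |c₂| + |c₃| ≤ 3*m+2 ∧
      (32*m^3+80*m^2+70*m+21) ∣ (c₁ + (4*m+3)*c₂ + (16*m^2+28*m+13)*c₃ - x) := by
  apply reduceLem _ _ _ _ (by nlinarith)
    (by have h : (32*m^3+80*m^2+70*m+21 : ℤ) = 2*(16*m^3+40*m^2+35*m+10)+1 := by ring
        omega)
  intro r hr0 hr1
  have hb : (0:ℤ) < 16*m^2+28*m+13 := by nlinarith
  have ha : (0:ℤ) < 4*m+3 := by omega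
  obtain ⟨t, y, hyr, hy0, hy1, ht0⟩ :
      ∃ t y : ℤ, (16*m^2+28*m+13) * t + y = r ∧ 0 ≤ y ∧ y < 16*m^2+28*m+13 ∧ 0 ≤ t :=
    ⟨r / (16*m^2+28*m+13), r % (16*m^2+28*m+13), Int.mul_ediv_add_emod r _,
      Int.emod_nonneg r hb.ne', Int.emod_lt_of_pos r hb, Int.ediv_nonneg hr0 hb.le⟩
  have htm : t ≤ m := by
    have h2 : (16*m^2+28*m+13) * t < (16*m^2+28*m+13) * (m+1) := by nlinarith
    have h3 := lt_of_mul_lt_mul_left h2 hb.le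
    omega
  obtain ⟨q0, s0, hsy, hs00, hs01, hq00⟩ :
      ∃ q0 s0 : ℤ, (4*m+3) * q0 + s0 = y ∧ 0 ≤ s0 ∧ s0 < 4*m+3 ∧ 0 ≤ q0 :=
    ⟨y / (4*m+3), y % (4*m+3), Int.mul_ediv_add_emod y _,
      Int.emod_nonneg y ha.ne', Int.emod_lt_of_pos y ha, Int.ediv_nonneg hy0 ha.le⟩
  obtain ⟨q, s, hr, hq0, hq1, hsl, hsu⟩ :
      ∃ q s : ℤ, (16*m^2+28*m+13)*t + (4*m+3)*q + s = r ∧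
        0 ≤ q ∧ q ≤ 4*m+4 ∧ -(2*m+1) ≤ s ∧ s ≤ 2*m+1 := by
    rcases le_or_gt s0 (2*m+1) with hs | hs
    · refine ⟨q0, s0, by linarith, hq00, ?_, by omega, hs⟩
      have h2 : (4*m+3) * q0 < (4*m+3) * (4*m+5) := by nlinarith
      have h3 := lt_of_mul_lt_mul_left h2 ha.le
      omega
    · refine ⟨q0 + 1, s0 - (4*m+3), by linarith, by omega, ?_, by omega, by omega⟩
      have h2 : (4*m+3) * q0 < (4*m+3) * (4*m+4) := by nlinarith
      have h3 := lt_of_mul_lt_mul_left h2 ha.le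
      omega
  have hcase : |s| + |q| + |t| ≤ 3*m+2 ∨ |s-2*m-2| + |q-2*m-2| + |t-2*m-1| ≤ 3*m+2 ∨
      |s+2*m+1| + |q-2*m-3| + |t-2*m-1| ≤ 3*m+2 ∨ |s-1| + |q-4*m-4| + |t+1| ≤ 3*m+2 ∨
      |s+4*m+2| + |q-4*m-5| + |t+1| ≤ 3*m+2 := by
    simp only [Int.abs_eq_natAbs]; omega
  rcases hcase with hc | hc | hc | hc | hc
  · exact ⟨s, q, t, hc, ⟨0, by linear_combination hr⟩⟩
  · exact ⟨s-2*m-2, q-2*m-2, t-2*m-1, hc, ⟨-1, by linear_combination hr⟩⟩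
  · exact ⟨s+2*m+1, q-2*m-3, t-2*m-1, hc, ⟨-1, by linear_combination hr⟩⟩
  · exact ⟨s-1, q-4*m-4, t+1, hc, ⟨0, by linear_combination hr⟩⟩
  · exact ⟨s+4*m+2, q-4*m-5, t+1, hc, ⟨0, by linear_combination hr⟩⟩

private lemma key1 (m : ℤ) (hm : 0 ≤ m) (x : ℤ) :
    ∃ c₁ c₂ c₃ : ℤ, |c₁| + |c₂| + |c₃| ≤ 3*m+1 ∧
      (32*m^3+48*m^2+30*m+7) ∣ (c₁ + (8*m^2+6*m+2)*c₂ + (32*m^3+40*m^2+20*m+3)*c₃ - x) := by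
  apply reduceLem _ _ _ _ (by nlinarith)
    (by have h : (32*m^3+48*m^2+30*m+7 : ℤ) = 2*(16*m^3+24*m^2+15*m+3)+1 := by ring
        omega)
  intro r hr0 hr1
  have ha : (0:ℤ) < 8*m^2+6*m+2 := by nlinarith
  have hp : (0:ℤ) < 4*m+2 := by omega
  obtain ⟨q, s, hsr, hs0, hs1, hq0⟩ :
      ∃ q s : ℤ, (8*m^2+6*m+2) * q + s = r ∧ 0 ≤ s ∧ s < 8*m^2+6*m+2 ∧ 0 ≤ q :=
    ⟨r / (8*m^2+6*m+2), r % (8*m^2+6*m+2), Int.mul_ediv_add_emod r _,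
      Int.emod_nonneg r ha.ne', Int.emod_lt_of_pos r ha, Int.ediv_nonneg hr0 ha.le⟩
  have hq1 : q ≤ 2*m+1 := by
    have h2 : (8*m^2+6*m+2) * q < (8*m^2+6*m+2) * (2*m+2) := by nlinarith
    have h3 := lt_of_mul_lt_mul_left h2 ha.le
    omega
  obtain ⟨j, d, hds, hd0, hd1, hj0⟩ :
      ∃ j d : ℤ, (4*m+2) * j + d = s ∧ 0 ≤ d ∧ d < 4*m+2 ∧ 0 ≤ j :=
    ⟨s / (4*m+2), s % (4*m+2), Int.mul_ediv_add_emod s _,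
      Int.emod_nonneg s hp.ne', Int.emod_lt_of_pos s hp, Int.ediv_nonneg hs0 hp.le⟩
  have hj1 : j ≤ 2*m := by
    have h2 : (4*m+2) * j < (4*m+2) * (2*m+1) := by nlinarith
    have h3 := lt_of_mul_lt_mul_left h2 hp.le
    omega
  have hr : (8*m^2+6*m+2) * q + ((4*m+2) * j + d) = r := by linarith
  have hcase : |d| + |q-j| + |(-j)| ≤ 3*m+1 ∨ |d-(4*m+2)| + |q-j-1| + |(-j-1)| ≤ 3*m+1 ∨
      |d-2*m-2| + |q+2*m-j+1| + |2*m-j| ≤ 3*m+1 ∨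
      |d-2*m-1| + |q-2*m-1-j| + |2*m+1-j| ≤ 3*m+1 := by
    simp only [Int.abs_eq_natAbs]; omega
  rcases hcase with hc | hc | hc | hc
  · exact ⟨d, q-j, -j, hc, ⟨-j, by linear_combination hr⟩⟩
  · exact ⟨d-(4*m+2), q-j-1, -j-1, hc, ⟨-j-1, by linear_combination hr⟩⟩
  · exact ⟨d-2*m-2, q+2*m-j+1, 2*m-j, hc, ⟨2*m-j, by linear_combination hr⟩⟩
  · exact ⟨d-2*m-1, q-2*m-1-j, 2*m+1-j, hc, ⟨2*m-j, by linear_combination hr⟩⟩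
private lemma buildLem (n k : ℕ) (A B : ℤ) (hn : 0 < n)
    (key : ∀ x : ℤ, ∃ c₁ c₂ c₃ : ℤ, |c₁| + |c₂| + |c₃| ≤ (k:ℤ) ∧
      (n:ℤ) ∣ (c₁ + A*c₂ + B*c₃ - x)) :
    (∃ (G : AddCommGrpCat.{0}) (g : Fin 3 → G), Finite G ∧ IsAddCyclic G ∧ Nat.card G = n ∧
      ∀ a : G, ∃ c : Fin 3 → ℤ, (∑ i, |c i|) ≤ (k : ℤ) ∧ (∑ i, c i • g i) = a) ∧
    (∃ L : AddSubgroup (Fin 3 → ℤ), IsAddCyclic ((Fin 3 → ℤ) ⧸ L) ∧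
      L.index = n ∧ L.index ≠ 0 ∧
      ∀ x : Fin 3 → ℤ, ∃ s : Fin 3 → ℤ, (∑ i, |s i|) ≤ (k : ℤ) ∧ x - s ∈ L) := by
  haveI : NeZero n := ⟨hn.ne'⟩
  have hval : ∀ z : ZMod n, ((z.val : ℤ) : ZMod n) = z := by
    intro z
    push_cast
    simp [ZMod.natCast_val, ZMod.cast_id]
  constructor
  · refine ⟨AddCommGrpCat.of (ZMod n),
      ((![(1 : ZMod n), (A : ZMod n), (B : ZMod n)] : Fin 3 → ZMod n) :
        Fin 3 → AddCommGrpCat.of (ZMod n)),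
      inferInstanceAs (Finite (ZMod n)), inferInstanceAs (IsAddCyclic (ZMod n)), by
        simpa using (Nat.card_zmod n), ?_⟩
    intro a
    obtain ⟨c₁, c₂, c₃, hc, w, hw⟩ := key ((a : ZMod n).val : ℤ)
    refine ⟨![c₁, c₂, c₃], by simpa [Fin.sum_univ_three] using hc, ?_⟩
    show c₁ • (1 : ZMod n) + (c₂ • (A : ZMod n) + (c₃ • (B : ZMod n) + 0)) = a
    have h1 : c₁ + A*c₂ + B*c₃ = ((a : ZMod n).val : ℤ) + (n:ℤ)*w := by linarith [hw]
    calc c₁ • (1 : ZMod n) + (c₂ • (A : ZMod n) + (c₃ • (B : ZMod n) + 0))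
        = ((c₁ + A*c₂ + B*c₃ : ℤ) : ZMod n) := by
          push_cast
          rw [zsmul_eq_mul, zsmul_eq_mul, zsmul_eq_mul]
          push_cast
          ring
      _ = a := by rw [h1]; push_cast [ZMod.natCast_self]; simpa using hval a
  · let f : (Fin 3 → ℤ) →+ ZMod n := AddMonoidHom.mk' 
      (fun x => ((x 0 + A * x 1 + B * x 2 : ℤ) : ZMod n))
      (fun x y => by simp only [Pi.add_apply]; push_cast; ring)
    have hfs : Function.Surjective f := by
      intro z
      refine ⟨![(z.val : ℤ), 0, 0], ?_⟩
      show (((z.val : ℤ) + A * 0 + B * 0 : ℤ) : ZMod n) = z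
      simpa using hval z
    have e : ((Fin 3 → ℤ) ⧸ f.ker) ≃+ ZMod n :=
      QuotientAddGroup.quotientKerEquivOfSurjective f hfs
    have hidx : f.ker.index = n := by
      rw [AddSubgroup.index, Nat.card_congr e.toEquiv, Nat.card_zmod]
    refine ⟨f.ker, isAddCyclic_of_surjective e.symm e.symm.surjective, hidx,
      by omega, ?_⟩
    intro x
    obtain ⟨c₁, c₂, c₃, hc, hdvd⟩ := key (x 0 + A * x 1 + B * x 2)
    refine ⟨![c₁, c₂, c₃], by simpa [Fin.sum_univ_three] using hc, ?_⟩
    rw [AddMonoidHom.mem_ker]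
    show (((x - ![c₁, c₂, c₃]) 0 + A * (x - ![c₁, c₂, c₃]) 1
        + B * (x - ![c₁, c₂, c₃]) 2 : ℤ) : ZMod n) = 0
    have h2 : (x - ![c₁, c₂, c₃]) 0 + A * (x - ![c₁, c₂, c₃]) 1
        + B * (x - ![c₁, c₂, c₃]) 2
        = -(c₁ + A*c₂ + B*c₃ - (x 0 + A * x 1 + B * x 2)) := by
      simp [Pi.sub_apply]; ring
    rw [h2]
    rw [ZMod.intCast_zmod_eq_zero_iff_dvd]
    exact dvd_neg.mpr hdvd

/-- For each `k` there is a finite cyclic group with three generators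
whose undirected Cayley graph has diameter at most `k` and whose order is
`(32k³+48k²+54k+27)/27`, `(32k³+48k²+78k+31)/27`, or `(32k³+48k²+54k+11)/27`
according as `k ≡ 0, 1, 2 (mod 3)`; equivalently there is a finite-index subgroup
`L ≤ ℤ³` with `ℤ³/L` cyclic, `S_{3,k} + L = ℤ³`, and `[ℤ³ : L]` equal to this value. -/
theorem stmt14 (k : ℕ) :
    (∃ (G : AddCommGrpCat.{0}) (g : Fin 3 → G), Finite G ∧ IsAddCyclic G ∧
      Nat.card G = (if k % 3 = 0 then (32 * k ^ 3 + 48 * k ^ 2 + 54 * k + 27) / 27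
        else if k % 3 = 1 then (32 * k ^ 3 + 48 * k ^ 2 + 78 * k + 31) / 27
        else (32 * k ^ 3 + 48 * k ^ 2 + 54 * k + 11) / 27) ∧
      ∀ a : G, ∃ c : Fin 3 → ℤ, (∑ i, |c i|) ≤ (k : ℤ) ∧ (∑ i, c i • g i) = a) ∧
    (∃ L : AddSubgroup (Fin 3 → ℤ), IsAddCyclic ((Fin 3 → ℤ) ⧸ L) ∧
      L.index = (if k % 3 = 0 then (32 * k ^ 3 + 48 * k ^ 2 + 54 * k + 27) / 27
        else if k % 3 = 1 then (32 * k ^ 3 + 48 * k ^ 2 + 78 * k + 31) / 27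
        else (32 * k ^ 3 + 48 * k ^ 2 + 54 * k + 11) / 27) ∧ L.index ≠ 0 ∧
      ∀ x : Fin 3 → ℤ, ∃ s : Fin 3 → ℤ, (∑ i, |s i|) ≤ (k : ℤ) ∧ x - s ∈ L) := by
  obtain ⟨m, hm⟩ : ∃ m : ℕ, k = 3*m ∨ k = 3*m+1 ∨ k = 3*m+2 := ⟨k/3, by omega⟩
  rcases hm with h | h | h
  · have hk3 : k % 3 = 0 := by omega
    have hN : (32 * k ^ 3 + 48 * k ^ 2 + 54 * k + 27) / 27 = 32*m^3+16*m^2+6*m+1 := by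
      subst h
      have h27 : 32 * (3*m) ^ 3 + 48 * (3*m) ^ 2 + 54 * (3*m) + 27
          = 27 * (32*m^3+16*m^2+6*m+1) := by ring
      rw [h27, Nat.mul_div_cancel_left _ (by norm_num)]
    rw [if_pos hk3, hN]
    refine buildLem _ k (4*(m:ℤ)+1) (16*(m:ℤ)^2+4*(m:ℤ)+1) (by positivity) ?_
    intro x
    obtain ⟨c₁, c₂, c₃, hc, hd⟩ := key0 (m:ℤ) (by positivity) x
    refine ⟨c₁, c₂, c₃, ?_, by exact_mod_cast hd⟩
    have hk : (k:ℤ) = 3*(m:ℤ) := by rw [h]; push_cast; ring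
    rw [hk]; exact hc
  · have hk3 : k % 3 = 1 := by omega
    have hN : (32 * k ^ 3 + 48 * k ^ 2 + 78 * k + 31) / 27 = 32*m^3+48*m^2+30*m+7 := by
      subst h
      have h27 : 32 * (3*m+1) ^ 3 + 48 * (3*m+1) ^ 2 + 78 * (3*m+1) + 31
          = 27 * (32*m^3+48*m^2+30*m+7) := by ring
      rw [h27, Nat.mul_div_cancel_left _ (by norm_num)]
    rw [if_neg (by omega), if_pos hk3, hN]
    refine buildLem _ k (8*(m:ℤ)^2+6*(m:ℤ)+2) (32*(m:ℤ)^3+40*(m:ℤ)^2+20*(m:ℤ)+3)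
      (by positivity) ?_
    intro x
    obtain ⟨c₁, c₂, c₃, hc, hd⟩ := key1 (m:ℤ) (by positivity) x
    refine ⟨c₁, c₂, c₃, ?_, by exact_mod_cast hd⟩
    have hk : (k:ℤ) = 3*(m:ℤ)+1 := by rw [h]; push_cast; ring
    rw [hk]; exact hc
  · have hk3 : k % 3 = 2 := by omega
    have hN : (32 * k ^ 3 + 48 * k ^ 2 + 54 * k + 11) / 27 = 32*m^3+80*m^2+70*m+21 := by
      subst h
      have h27 : 32 * (3*m+2) ^ 3 + 48 * (3*m+2) ^ 2 + 54 * (3*m+2) + 11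
          = 27 * (32*m^3+80*m^2+70*m+21) := by ring
      rw [h27, Nat.mul_div_cancel_left _ (by norm_num)]
    rw [if_neg (by omega), if_neg (by omega), hN]
    refine buildLem _ k (4*(m:ℤ)+3) (16*(m:ℤ)^2+28*(m:ℤ)+13) (by positivity) ?_
    intro x
    obtain ⟨c₁, c₂, c₃, hc, hd⟩ := key2 (m:ℤ) (by positivity) x
    refine ⟨c₁, c₂, c₃, ?_, by exact_mod_cast hd⟩
    have hk : (k:ℤ) = 3*(m:ℤ)+2 := by rw [h]; push_cast; ring
    rw [hk]; exact hc
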